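/- Let $n \geq 4$ be a perfect square, $k < \sqrt{n}/2$, and let $e(k) = \mathbb{E}_x[x_1 \cdots x_k]$ where $x$ is uniform on the slice $\{x \in \{\pm 1\}^n : \sum_i x_i = \sqrt{n}\}$. Then $|e(k)| \leq 2 \cdot 3^{k^3} \cdot n^{-k/2}$. -/

import Mathlib

open Finset

namespace Stmt10

variable {n : ℕ}

noncomputable def χ (s : Fin n → Bool) (i : Fin n) : ℝ := if s i then 1 else -1

noncomputable def P (S : Finset (Fin n → Bool)) (T : Finset (Fin n)) : ℝ :=
  ∑ s ∈ S, ∏ i ∈ T, χ s i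

def Tj (n j : ℕ) : Finset (Fin n) := Finset.univ.filter fun i => i.val < j

lemma sq_χ (s : Fin n → Bool) (i : Fin n) : χ s i * χ s i = 1 := by
  unfold χ; split <;> norm_num

lemma card_Tj (j : ℕ) (h : j ≤ n) : (Tj n j).card = j := by
  classical
  have : Tj n j = (Finset.range j).attachFin
      (fun m hm => lt_of_lt_of_le (Finset.mem_range.mp hm) h) := by
    ext i; simp [Tj, Finset.mem_attachFin]
  rw [this, Finset.card_attachFin, Finset.card_range]

variable {S : Finset (Fin n → Bool)}

lemma sum_χ (hS : S = Finset.univ.filter fun s =>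
      (∑ i, (if s i then (1 : ℝ) else -1)) = Real.sqrt n)
    {s : Fin n → Bool} (hs : s ∈ S) : ∑ i, χ s i = Real.sqrt n := by
  rw [hS, Finset.mem_filter] at hs
  simpa [χ] using hs.2

lemma perm_sum (hS : S = Finset.univ.filter fun s =>
      (∑ i, (if s i then (1 : ℝ) else -1)) = Real.sqrt n)
    (σ : Equiv.Perm (Fin n)) (T : Finset (Fin n)) :
    ∑ s ∈ S, ∏ i ∈ T, χ s (σ i) = P S T := by
  rw [P]
  refine Finset.sum_equiv (Equiv.arrowCongr σ.symm (Equiv.refl Bool)) ?_ ?_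
  · intro s
    have hsum : (∑ i, (if (Equiv.arrowCongr σ.symm (Equiv.refl Bool)) s i then (1:ℝ) else -1))
        = ∑ i, (if s i then (1:ℝ) else -1) := by
      rw [show (∑ i, (if (Equiv.arrowCongr σ.symm (Equiv.refl Bool)) s i then (1:ℝ) else -1))
          = ∑ i, (if s (σ i) then (1:ℝ) else -1) from
        Finset.sum_congr rfl fun i _ => by simp [Equiv.arrowCongr]]
      exact Equiv.sum_comp σ (fun i => if s i then (1:ℝ) else -1)
    simp only [hS, Finset.mem_filter, Finset.mem_univ, true_and, hsum]
  · intro s _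
    refine Finset.prod_congr rfl fun i _ => ?_
    simp [χ, Equiv.arrowCongr]

lemma P_image (hS : S = Finset.univ.filter fun s =>
      (∑ i, (if s i then (1 : ℝ) else -1)) = Real.sqrt n)
    (σ : Equiv.Perm (Fin n)) (T : Finset (Fin n)) :
    P S (T.image σ) = P S T := by
  rw [P]
  calc ∑ s ∈ S, ∏ i ∈ T.image σ, χ s i
      = ∑ s ∈ S, ∏ i ∈ T, χ s (σ i) :=
        Finset.sum_congr rfl fun s _ =>
          Finset.prod_image (fun a _ b _ h => σ.injective h)
    _ = P S T := perm_sum hS σ T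

lemma P_card_eq (hS : S = Finset.univ.filter fun s =>
      (∑ i, (if s i then (1 : ℝ) else -1)) = Real.sqrt n)
    {T T' : Finset (Fin n)} (h : T.card = T'.card) : P S T = P S T' := by
  classical
  have hcard : Fintype.card {x // x ∈ T'} = Fintype.card {x // x ∈ T} := by
    simp [Fintype.card_coe, h]
  let e : {x // x ∈ T'} ≃ {x // x ∈ T} := Fintype.equivOfCardEq hcard
  let σ : Equiv.Perm (Fin n) := e.extendSubtype
  have himg : T'.image σ = T := by
    apply Finset.eq_of_subset_of_card_le
    · intro x hx
      obtain ⟨a, ha, rfl⟩ := Finset.mem_image.mp hx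
      exact e.extendSubtype_mem a ha
    · rw [Finset.card_image_of_injective _ σ.injective, h]
  calc P S T = P S (T'.image σ) := by rw [himg]
    _ = P S T' := P_image hS σ T'

lemma rec_P (hS : S = Finset.univ.filter fun s =>
      (∑ i, (if s i then (1 : ℝ) else -1)) = Real.sqrt n)
    {j : ℕ} (hj : j < n) :
    Real.sqrt n * P S (Tj n j)
      = (j : ℝ) * P S (Tj n (j - 1)) + ((n - j : ℕ) : ℝ) * P S (Tj n (j + 1)) := by
  classical
  have key : Real.sqrt n * P S (Tj n j)
      = ∑ i : Fin n, ∑ s ∈ S, χ s i * ∏ i' ∈ Tj n j, χ s i' := by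
    rw [P, Finset.mul_sum]
    rw [Finset.sum_comm]
    refine Finset.sum_congr rfl fun s hs => ?_
    rw [← Finset.sum_mul, sum_χ hS hs]
  rw [key]
  rw [← Finset.sum_filter_add_sum_filter_not Finset.univ (fun i : Fin n => i.val < j)]
  have hTj : (Finset.univ.filter fun i : Fin n => i.val < j) = Tj n j := rfl
  congr 1
  · -- erase part
    rw [hTj]
    have hterm : ∀ i ∈ Tj n j,
        (∑ s ∈ S, χ s i * ∏ i' ∈ Tj n j, χ s i') = P S (Tj n (j - 1)) := by
      intro i hi
      have h1 : (∑ s ∈ S, χ s i * ∏ i' ∈ Tj n j, χ s i')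
          = P S ((Tj n j).erase i) := by
        rw [P]
        refine Finset.sum_congr rfl fun s _ => ?_
        rw [← Finset.mul_prod_erase (Tj n j) (χ s) hi, ← mul_assoc, sq_χ, one_mul]
      rw [h1]
      apply P_card_eq hS
      rw [Finset.card_erase_of_mem hi, card_Tj j hj.le, card_Tj (j - 1) (by omega)]
    rw [Finset.sum_congr rfl hterm, Finset.sum_const, card_Tj j hj.le, nsmul_eq_mul]
  · -- insert part
    have hterm : ∀ i ∈ (Finset.univ.filter fun i : Fin n => ¬ i.val < j),
        (∑ s ∈ S, χ s i * ∏ i' ∈ Tj n j, χ s i') = P S (Tj n (j + 1)) := by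
      intro i hi
      have hnotmem : i ∉ Tj n j := by
        simp only [Finset.mem_filter, Finset.mem_univ, true_and] at hi ⊢
        simpa [Tj] using hi
      have h1 : (∑ s ∈ S, χ s i * ∏ i' ∈ Tj n j, χ s i')
          = P S (insert i (Tj n j)) := by
        rw [P]
        refine Finset.sum_congr rfl fun s _ => ?_
        rw [Finset.prod_insert hnotmem]
      rw [h1]
      apply P_card_eq hS
      rw [Finset.card_insert_of_notMem hnotmem, card_Tj j hj.le,
        card_Tj (j + 1) (by omega)]
    rw [Finset.sum_congr rfl hterm, Finset.sum_const, nsmul_eq_mul]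
    congr 2
    have := Finset.card_filter_add_card_filter_not
      (s := (Finset.univ : Finset (Fin n))) (p := fun i : Fin n => i.val < j)
    rw [hTj, card_Tj j hj.le, Finset.card_univ, Fintype.card_fin] at this
    omega

lemma pow_aux (t : ℕ) :
    4 * (3 ^ ((t + 1) ^ 3) + (t + 1) * 3 ^ (t ^ 3)) ≤ 3 * 3 ^ ((t + 2) ^ 3) := by
  have h1 : 3 * 3 ^ ((t + 1) ^ 3) ≤ 3 ^ ((t + 2) ^ 3) := by
    calc 3 * 3 ^ ((t + 1) ^ 3) = 3 ^ ((t + 1) ^ 3 + 1) := by ring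
      _ ≤ 3 ^ ((t + 2) ^ 3) := Nat.pow_le_pow_right (by norm_num) (by
          have h : (t + 2) ^ 3 = (t + 1) ^ 3 + (3 * (t + 1) ^ 2 + 3 * (t + 1) + 1) := by ring
          linarith [Nat.zero_le ((t + 1) ^ 2)])
  have h2 : 3 * ((t + 1) * 3 ^ (t ^ 3)) ≤ 3 ^ ((t + 2) ^ 3) := by
    have ha : t + 1 ≤ 3 ^ (t + 1) := Nat.le_of_lt (Nat.lt_pow_self (by norm_num))
    calc 3 * ((t + 1) * 3 ^ (t ^ 3)) ≤ 3 * (3 ^ (t + 1) * 3 ^ (t ^ 3)) := by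
          exact Nat.mul_le_mul_left 3 (Nat.mul_le_mul_right _ ha)
      _ = 3 ^ (t ^ 3 + t + 2) := by rw [← pow_add]; ring_nf
      _ ≤ 3 ^ ((t + 2) ^ 3) := Nat.pow_le_pow_right (by norm_num) (by
          have h : (t + 2) ^ 3 = t ^ 3 + (6 * t ^ 2 + 12 * t + 8) := by ring
          linarith [Nat.zero_le (t ^ 2)])
  omega

set_option maxHeartbeats 1000000 in
lemma main_bound {m : ℕ} (hm : 2 ≤ m) (hn' : n = m ^ 2)
    (hS : S = Finset.univ.filter fun s =>
      (∑ i, (if s i then (1 : ℝ) else -1)) = Real.sqrt n)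
    (hne : S.Nonempty) :
    ∀ j : ℕ, (j : ℝ) < (m : ℝ) / 2 →
      |P S (Tj n j)| * (m : ℝ) ^ j ≤ 2 * 3 ^ (j ^ 3) * S.card := by
  have hsqrt : Real.sqrt n = m := by
    rw [hn']; push_cast; exact Real.sqrt_sq (by positivity)
  have hMpos : (0 : ℝ) < m := by positivity
  have hcpos : (0 : ℝ) < S.card := by
    exact_mod_cast Finset.card_pos.mpr hne
  intro j
  induction j using Nat.strong_induction_on with
  | _ j IH =>
    rcases j with _ | _ | t
    · -- j = 0
      intro _
      have hT0 : Tj n 0 = ∅ := by ext i; simp [Tj]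
      have hP0 : P S (Tj n 0) = S.card := by simp [P, hT0]
      rw [hP0]
      simp only [pow_zero, mul_one]
      rw [abs_of_pos hcpos]
      norm_num
      linarith [hcpos]
    · -- j = 1
      intro _
      have hn0 : 0 < n := by rw [hn']; positivity
      have heq := rec_P hS (j := 0) hn0
      have hT0 : Tj n 0 = ∅ := by ext i; simp [Tj]
      have hP0 : P S (Tj n 0) = S.card := by simp [P, hT0]
      rw [hP0, hsqrt] at heq
      simp only [Nat.cast_zero, zero_mul, zero_add, Nat.sub_zero, zero_add] at heq
      -- heq : m * S.card = n * P S (Tj n 1)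
      have hnpos : (0 : ℝ) < n := by exact_mod_cast hn0
      have hnr : ((n : ℕ) : ℝ) = (m : ℝ) ^ 2 := by rw [hn']; push_cast; ring
      have hP1 : P S (Tj n 1) = (m : ℝ) * S.card / n := by
        field_simp at heq ⊢
        linarith [heq]
      rw [hP1, hnr, abs_of_nonneg (by positivity), pow_one]
      have hsimp : (m : ℝ) * S.card / (m : ℝ) ^ 2 * (m : ℝ) = S.card := by
        field_simp
      rw [hsimp]
      norm_num
      linarith [hcpos]
    · -- j = t + 2
      intro hj
      show |P S (Tj n (t + 2))| * (m : ℝ) ^ (t + 2) ≤ 2 * 3 ^ ((t + 2) ^ 3) * S.card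
      have hjr : ((t : ℝ) + 2) < (m : ℝ) / 2 := by push_cast at hj; linarith
      have htm : 2 * (t + 2) < m := by
        have : (2 * (t + 2) : ℝ) < m := by push_cast; linarith
        exact_mod_cast this
      have htn : t + 2 < n := by nlinarith
      have h1 := IH (t + 1) (by omega) (by push_cast; linarith)
      have h0 := IH t (by omega) (by push_cast; linarith)
      have hrec := rec_P hS (j := t + 1) (by omega)
      rw [hsqrt] at hrec
      have hcast : ((n - (t + 1) : ℕ) : ℝ) = (n : ℝ) - (t + 1) := by
        have : t + 1 ≤ n := by omega
        push_cast [this]; ring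
      rw [hcast] at hrec
      set P0 := P S (Tj n t) with hP0d
      set P1 := P S (Tj n (t + 1)) with hP1d
      set P2 := P S (Tj n (t + 1 + 1)) with hP2d
      have hts : (t + 1 : ℕ) - 1 = t := by omega
      rw [hts] at hrec
      -- hrec : m * P1 = (t+1) * P0 + (n - (t+1)) * P2
      set D : ℝ := (n : ℝ) - ((t : ℝ) + 1) with hD
      have hDrec : D * P2 = (m : ℝ) * P1 - ((t : ℝ) + 1) * P0 := by
        push_cast at hrec; linarith
      have hDlb : (3 / 4 : ℝ) * (m : ℝ) ^ 2 ≤ D := by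
        have hnr : (n : ℝ) = (m : ℝ) ^ 2 := by rw [hn']; push_cast; ring
        rw [hD, hnr]
        nlinarith
      have hMt : (0 : ℝ) < (m : ℝ) ^ t := by positivity
      have habs : D * |P2| ≤ (m : ℝ) * |P1| + ((t : ℝ) + 1) * |P0| := by
        have : |D * P2| ≤ (m : ℝ) * |P1| + ((t : ℝ) + 1) * |P0| := by
          rw [hDrec]
          calc |(m : ℝ) * P1 - ((t : ℝ) + 1) * P0|
              ≤ |(m : ℝ) * P1| + |((t : ℝ) + 1) * P0| := abs_sub _ _
            _ = (m : ℝ) * |P1| + ((t : ℝ) + 1) * |P0| := by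
                rw [abs_mul, abs_mul, abs_of_nonneg (by positivity : (0:ℝ) ≤ (m:ℝ)),
                  abs_of_nonneg (by positivity : (0:ℝ) ≤ (t:ℝ) + 1)]
        rwa [abs_mul, abs_of_nonneg (by linarith : (0:ℝ) ≤ D)] at this
      have e1 : D * |P2| * (m : ℝ) ^ t
          ≤ 2 * 3 ^ ((t + 1) ^ 3) * S.card + ((t : ℝ) + 1) * (2 * 3 ^ (t ^ 3) * S.card) := by
        calc D * |P2| * (m : ℝ) ^ t
            ≤ ((m : ℝ) * |P1| + ((t : ℝ) + 1) * |P0|) * (m : ℝ) ^ t :=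
              mul_le_mul_of_nonneg_right habs hMt.le
          _ = |P1| * (m : ℝ) ^ (t + 1) + ((t : ℝ) + 1) * (|P0| * (m : ℝ) ^ t) := by ring
          _ ≤ 2 * 3 ^ ((t + 1) ^ 3) * S.card + ((t : ℝ) + 1) * (2 * 3 ^ (t ^ 3) * S.card) := by
              gcongr
      have e2 : (3 / 4 : ℝ) * (m : ℝ) ^ 2 * (|P2| * (m : ℝ) ^ t) ≤ D * |P2| * (m : ℝ) ^ t := by
        have hnn : (0 : ℝ) ≤ |P2| * (m : ℝ) ^ t := by positivity
        calc (3 / 4 : ℝ) * (m : ℝ) ^ 2 * (|P2| * (m : ℝ) ^ t)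
            ≤ D * (|P2| * (m : ℝ) ^ t) := mul_le_mul_of_nonneg_right hDlb hnn
          _ = D * |P2| * (m : ℝ) ^ t := by ring
      have hknat := pow_aux t
      have hkreal : 4 * ((3 : ℝ) ^ ((t + 1) ^ 3) + ((t : ℝ) + 1) * 3 ^ (t ^ 3))
          ≤ 3 * 3 ^ ((t + 2) ^ 3) := by exact_mod_cast hknat
      have hkc := mul_le_mul_of_nonneg_right hkreal hcpos.le
      have e12 := e2.trans e1
      calc |P2| * (m : ℝ) ^ (t + 2)
          = (4 / 3 : ℝ) * ((3 / 4 : ℝ) * (m : ℝ) ^ 2 * (|P2| * (m : ℝ) ^ t)) := by ring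
        _ ≤ (4 / 3 : ℝ) * (2 * 3 ^ ((t + 1) ^ 3) * S.card
              + ((t : ℝ) + 1) * (2 * 3 ^ (t ^ 3) * S.card)) := by linarith [e12]
        _ = (2 / 3 : ℝ) * (4 * ((3 : ℝ) ^ ((t + 1) ^ 3) + ((t : ℝ) + 1) * 3 ^ (t ^ 3))
              * S.card) := by ring
        _ ≤ (2 / 3 : ℝ) * (3 * 3 ^ ((t + 2) ^ 3) * S.card) := by linarith [hkc]
        _ = 2 * 3 ^ ((t + 2) ^ 3) * S.card := by ring

lemma prod_conv (s : Fin n → Bool) {k : ℕ} (h : k ≤ n) :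
    (∏ j ∈ Finset.range k,
        (if hj : j < n then (if s ⟨j, hj⟩ then (1 : ℝ) else -1) else 0))
      = ∏ i ∈ Tj n k, χ s i := by
  refine Finset.prod_bij
    (fun l hl => (⟨l, lt_of_lt_of_le (Finset.mem_range.mp hl) h⟩ : Fin n)) ?_ ?_ ?_ ?_
  · intro a ha
    simp only [Tj, Finset.mem_filter, Finset.mem_univ, true_and]
    exact Finset.mem_range.mp ha
  · intro a ha b hb hab
    simpa using congrArg Fin.val hab
  · intro i hi
    simp only [Tj, Finset.mem_filter, Finset.mem_univ, true_and] at hi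
    exact ⟨i.val, Finset.mem_range.mpr hi, by simp⟩
  · intro a ha
    have ha' : a < n := lt_of_lt_of_le (Finset.mem_range.mp ha) h
    rw [dif_pos ha']
    rfl

end Stmt10

/-- For `n ≥ 4` a perfect square and `k < √n / 2`, the slice moment
`e(k) = E[x₁⋯x_k]` on `{x ∈ {±1}ⁿ : ∑ᵢ xᵢ = √n}` satisfies `|e(k)| ≤ 2 ⋅ 3^{k³} ⋅ n^{-k/2}`. -/
theorem stmt_10 (n k : ℕ) (hn : 4 ≤ n) (hsq : ∃ m : ℕ, n = m ^ 2)
    (hk : (k : ℝ) < Real.sqrt n / 2)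
    (S : Finset (Fin n → Bool))
    (hS : S = Finset.univ.filter fun s =>
      (∑ i, (if s i then (1 : ℝ) else -1)) = Real.sqrt n)
    (hne : S.Nonempty) :
    |(∑ s ∈ S, ∏ j ∈ Finset.range k,
        (if hj : j < n then (if s ⟨j, hj⟩ then (1 : ℝ) else -1) else 0)) / S.card|
      ≤ 2 * 3 ^ (k ^ 3) / Real.sqrt n ^ k := by
  obtain ⟨m, rfl⟩ := hsq
  have hm : 2 ≤ m := by nlinarith
  have hsqrt : Real.sqrt (m ^ 2 : ℕ) = m := by
    push_cast; exact Real.sqrt_sq (by positivity)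
  rw [hsqrt] at hk ⊢
  have hkn : k ≤ m ^ 2 := by
    have h2 : (2 : ℝ) ≤ (m : ℝ) := by exact_mod_cast hm
    have hkm : (k : ℝ) < ((m ^ 2 : ℕ) : ℝ) := by push_cast; nlinarith [hk]
    exact (Nat.cast_lt.mp hkm).le
  have hconv : (∑ s ∈ S, ∏ j ∈ Finset.range k,
        (if hj : j < m ^ 2 then (if s ⟨j, hj⟩ then (1 : ℝ) else -1) else 0))
      = Stmt10.P S (Stmt10.Tj (m ^ 2) k) := by
    rw [Stmt10.P]
    exact Finset.sum_congr rfl fun s _ => Stmt10.prod_conv s hkn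
  rw [hconv]
  have hmain := Stmt10.main_bound hm rfl hS hne k hk
  have hcpos : (0 : ℝ) < S.card := by exact_mod_cast Finset.card_pos.mpr hne
  rw [abs_div, abs_of_pos hcpos, div_le_div_iff₀ hcpos (by positivity)]
  linarith [hmain]
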